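/- In the formal character ring, the short q-analogues of λ satisfy the generating identity Σ_{μ∈X} m̄^μ_λ(q) e^μ = χ_λ · ∏_{α>0}(1 − e^{−α}) / ∏_{α∈Δ⁺_s}(1 − q e^{−α}). Consequently m̄^μ_λ(q) = Σ_{A⊂Δ⁺_l} (−q)^{#A} m^{μ+|A|}_λ(q), relating short q-analogues to Lusztig's q-analogues m^ν_λ(q), and at q = 1, μ = 0: dim V_λ^H = Σ_{A⊂Δ⁺_l} (−1)^{#A} m^{|A|}_λ, where m^ν_λ is the weight multiplicity of ν in V_λ and |A| is the sum of the elements of A. -/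

import Mathlib

noncomputable section
open Finset
open scoped RealInnerProductSpace

attribute [local instance] Classical.propDecidable

/-- The finset of `ι`-tuples of naturals with sum `j`. -/
def tuples (ι : Type) [Fintype ι] (j : ℕ) : Finset (ι → ℕ) :=
  (Fintype.piFinset fun _ : ι => Finset.range (j + 1)).filter (fun c => ∑ i, c i = j)

/-- The `q`-analogue of the partition function attached to the multiset of weights
`a : ι → M`: the coefficient of `q^j` at `ν` is the number of ways to write `ν` as a sum
of `j` elements of the multiset. -/
def PPart {M : Type} [AddCommGroup M] {ι : Type} [Fintype ι] (a : ι → M) (ν : M) :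
    PowerSeries ℤ :=
  PowerSeries.mk fun j => (((tuples ι j).filter (fun c => ∑ i, c i • a i = ν)).card : ℤ)

variable (V : Type) [NormedAddCommGroup V] [InnerProductSpace ℝ V]

/-- Data of a (crystallographic, reduced) root system inside a real inner product space,
together with a linear functional `pol` (nonvanishing on roots) singling out the
positive roots. -/
structure RootSystemData where
  Δ : Finset V
  pol : V →ₗ[ℝ] ℝ
  nonzero : (0 : V) ∉ Δ
  neg_mem : ∀ α ∈ Δ, -α ∈ Δ
  reduced : ∀ α ∈ Δ, ∀ t : ℝ, t • α ∈ Δ → t = 1 ∨ t = -1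
  crys : ∀ α ∈ Δ, ∀ β ∈ Δ, ∃ n : ℤ, 2 * ⟪α, β⟫ / ⟪α, α⟫ = (n : ℝ)
  reflect_mem : ∀ α ∈ Δ, ∀ β ∈ Δ, β - (2 * ⟪α, β⟫ / ⟪α, α⟫) • α ∈ Δ
  pol_ne : ∀ α ∈ Δ, pol α ≠ 0

variable {V}

namespace RootSystemData

variable (R : RootSystemData V)

/-- The positive roots. -/
def pos : Finset V := R.Δ.filter (fun α => 0 < R.pol α)

/-- The short roots (roots of minimal length). -/
def short : Finset V := R.Δ.filter (fun α => ∀ β ∈ R.Δ, ‖α‖ ≤ ‖β‖)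

/-- The long roots. -/
def long : Finset V := R.Δ.filter (fun α => ∃ β ∈ R.Δ, ‖β‖ < ‖α‖)

/-- Short positive roots `Δ⁺_s`. -/
def posS : Finset V := R.pos ∩ R.short

/-- Long positive roots `Δ⁺_l`. -/
def posL : Finset V := R.pos ∩ R.long

/-- The simple roots: indecomposable positive roots. -/
def simples : Finset V := R.pos.filter (fun α => ¬ ∃ β ∈ R.pos, ∃ γ ∈ R.pos, β + γ = α)

/-- Short simple roots `Π_s`. -/
def simplesS : Finset V := R.simples ∩ R.short

/-- Long simple roots `Π_l`. -/
def simplesL : Finset V := R.simples ∩ R.long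

/-- `ρ`, the half-sum of positive roots. -/
def rho : V := (2 : ℝ)⁻¹ • ∑ α ∈ R.pos, α

/-- `ρ_s`, the half-sum of short positive roots. -/
def rhoS : V := (2 : ℝ)⁻¹ • ∑ α ∈ R.posS, α

/-- `ρ_l`, the half-sum of long positive roots. -/
def rhoL : V := (2 : ℝ)⁻¹ • ∑ α ∈ R.posL, α

/-- `g` is the orthogonal reflection in (the hyperplane orthogonal to) some `α ∈ S`. -/
def IsReflectionIn (S : Finset V) (g : V ≃ₗ[ℝ] V) : Prop :=
  ∃ α ∈ S, ∀ x : V, g x = x - (2 * ⟪α, x⟫ / ⟪α, α⟫) • α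

/-- The Weyl group `W`, generated by all root reflections. -/
def weyl : Subgroup (V ≃ₗ[ℝ] V) := Subgroup.closure {g | IsReflectionIn R.Δ g}

/-- `W_l`, the subgroup generated by reflections in long roots. -/
def weylL : Subgroup (V ≃ₗ[ℝ] V) := Subgroup.closure {g | IsReflectionIn R.long g}

/-- `W(Π_s)`, the subgroup generated by reflections in short simple roots. -/
def weylS : Subgroup (V ≃ₗ[ℝ] V) := Subgroup.closure {g | IsReflectionIn R.simplesS g}

/-- The length `ℓ(w)` of an element, as the number of inversions:
positive roots sent to negative roots. -/
def len (w : V ≃ₗ[ℝ] V) : ℕ := (R.pos.filter (fun α => -(w α) ∈ R.pos)).card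

/-- Dominant weights. -/
def Dominant (μ : V) : Prop := ∀ α ∈ R.pos, 0 ≤ ⟪μ, α⟫

/-- `H`-dominant weights: dominant with respect to the long positive roots. -/
def DominantL (μ : V) : Prop := ∀ α ∈ R.posL, 0 ≤ ⟪μ, α⟫

/-- The root system is irreducible. -/
def IsIrreducible : Prop :=
  ¬ ∃ S T : Finset V, S.Nonempty ∧ T.Nonempty ∧ S ∪ T = R.Δ ∧
    ∀ α ∈ S, ∀ β ∈ T, ⟪α, β⟫ = 0

/-- The root system has two root lengths. -/
def TwoLengths : Prop := ∃ α ∈ R.Δ, ∃ β ∈ R.Δ, ‖α‖ ≠ ‖β‖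

/-- The roots span `V`. -/
def Spans : Prop := Submodule.span ℝ (R.Δ : Set V) = ⊤

/-- `μ ≼ ν` in the root order: `ν - μ` is a non-negative integer combination of
positive roots. -/
def rootLE (μ ν : V) : Prop := ∃ c : R.pos → ℕ, ν - μ = ∑ α : R.pos, c α • (α : V)

/-- The generalised Kostka–Foulkes polynomial `m^μ_{λ,Ψ}(q)` attached to the multiset of
weights `a : ι → V`. -/
def genKF {ι : Type} [Fintype ι] (a : ι → V) [Fintype R.weyl] (lam mu : V) :
    PowerSeries ℤ :=
  ∑ w : R.weyl, ((-1 : ℤ) ^ R.len (w : V ≃ₗ[ℝ] V)) •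
    PPart a ((w : V ≃ₗ[ℝ] V) (lam + R.rho) - (mu + R.rho))

/-- The short `q`-analogue `m̄^μ_λ(q)`. -/
def mbar [Fintype R.weyl] (lam mu : V) : PowerSeries ℤ :=
  R.genKF (fun α : R.posS => (α : V)) lam mu

/-- Lusztig's `q`-analogue `m^μ_λ(q)`. -/
def mfull [Fintype R.weyl] (lam mu : V) : PowerSeries ℤ :=
  R.genKF (fun α : R.pos => (α : V)) lam mu

/-- The weight multiplicity `m_λ^μ` of `μ` in the simple module `V_λ`, via Kostant's
multiplicity formula (`q = 1` value of Lusztig's `q`-analogue), for the partition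
function attached to an arbitrary multiset of weights `a : ι → V`. -/
def mult1 [Fintype R.weyl] {ι : Type} [Fintype ι] (a : ι → V) (lam mu : V) : ℤ :=
  ∑ w : R.weyl, ((-1 : ℤ) ^ R.len (w : V ≃ₗ[ℝ] V)) *
    (Nat.card {c : ι → ℕ // ∑ i, c i • a i = (w : V ≃ₗ[ℝ] V) (lam + R.rho) - (mu + R.rho)} : ℤ)

/-- `e^μ`, a basis element of the group algebra of the weight lattice. -/
def expo {k : Type} [CommRing k] (μ : V) : AddMonoidAlgebra k V := AddMonoidAlgebra.single μ 1

/-- The skew-symmetrisation operator `J = Σ_{w ∈ W} (-1)^{ℓ(w)} w`. -/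
def Jop {k : Type} [CommRing k] [Fintype R.weyl] (a : AddMonoidAlgebra k V) :
    AddMonoidAlgebra k V :=
  ∑ w : R.weyl, ((-1 : ℤ) ^ R.len (w : V ≃ₗ[ℝ] V)) •
    AddMonoidAlgebra.mapDomain (⇑(w : V ≃ₗ[ℝ] V)) a

end RootSystemData

/-- `Σ_{μ∈X} m̄^μ_λ(q) e^μ`, expanded coefficientwise in `q`. -/
def Fser {V : Type} [NormedAddCommGroup V] [InnerProductSpace ℝ V]
    (R : RootSystemData V) [Fintype R.weyl] (lam : V) :
    PowerSeries (AddMonoidAlgebra ℤ V) :=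
  PowerSeries.mk fun j =>
    ∑ w : R.weyl, ∑ c ∈ tuples R.posS j,
      ((-1 : ℤ) ^ R.len (w : V ≃ₗ[ℝ] V)) •
        RootSystemData.expo ((w : V ≃ₗ[ℝ] V) (lam + R.rho) - R.rho -
          ∑ i : R.posS, c i • (i : V))


section Statement19Aux

open PowerSeries

variable {V : Type} [NormedAddCommGroup V] [InnerProductSpace ℝ V]

local notation "𝕜" => AddMonoidAlgebra ℤ V

lemma expo_zero : (RootSystemData.expo 0 : 𝕜) = 1 := by
  rw [RootSystemData.expo, AddMonoidAlgebra.one_def]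

lemma expo_add (μ ν : V) :
    (RootSystemData.expo (μ + ν) : 𝕜) =
      RootSystemData.expo μ * RootSystemData.expo ν := by
  simp [RootSystemData.expo, AddMonoidAlgebra.single_mul_single]

lemma expo_sum {A : Type*} (s : Finset A) (f : A → V) :
    (RootSystemData.expo (∑ i ∈ s, f i) : 𝕜) = ∏ i ∈ s, RootSystemData.expo (f i) := by
  induction s using Finset.cons_induction with
  | empty => simpa using expo_zero
  | cons a s ha ih => rw [Finset.sum_cons, Finset.prod_cons, expo_add, ih]

lemma expo_pow (n : ℕ) (μ : V) :
    (RootSystemData.expo (n • μ) : 𝕜) = RootSystemData.expo μ ^ n := by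
  induction n with
  | zero => simpa using expo_zero
  | succ n ih => rw [succ_nsmul, expo_add, ih, pow_succ]

/-- The generating series of the partition function attached to `a`. -/
def Pser {ι : Type} [Fintype ι] (a : ι → V) : PowerSeries 𝕜 :=
  PowerSeries.mk fun j => ∑ c ∈ tuples ι j, RootSystemData.expo (-(∑ i, c i • a i))

lemma geom_mul {R : Type} [CommRing R] (r : R) :
    (PowerSeries.mk fun n => r ^ n) * (1 - PowerSeries.X * PowerSeries.C (R := R) r) = 1 := by
  have h : PowerSeries.X * PowerSeries.C (R := R) r = PowerSeries.C (R := R) r * PowerSeries.X :=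
    mul_comm _ _
  ext n
  rw [mul_sub, mul_one, map_sub, h, ← mul_assoc]
  cases n with
  | zero => simp
  | succ n =>
      rw [PowerSeries.coeff_succ_mul_X, PowerSeries.coeff_mul_C, PowerSeries.coeff_mk,
        PowerSeries.coeff_mk, ← pow_succ]
      simp [PowerSeries.coeff_one]

lemma Pser_eq_prod {ι : Type} [Fintype ι] (a : ι → V) :
    Pser a = ∏ i : ι, PowerSeries.mk fun n => (RootSystemData.expo (-(a i)) : 𝕜) ^ n := by
  classical
  refine PowerSeries.ext fun j => ?_
  rw [PowerSeries.coeff_prod]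
  simp only [Pser, PowerSeries.coeff_mk]
  refine Finset.sum_nbij' (fun c => Finsupp.equivFunOnFinite.symm c)
    (fun l => ⇑l) ?_ ?_ ?_ ?_ ?_
  · intro c hc
    simp only [tuples, Finset.mem_filter] at hc
    rw [Finset.mem_finsuppAntidiag]
    refine ⟨?_, Finset.subset_univ _⟩
    simpa using hc.2
  · intro l hl
    rw [Finset.mem_finsuppAntidiag] at hl
    simp only [tuples, Finset.mem_filter, Fintype.mem_piFinset, Finset.mem_range]
    constructor
    · intro i
      rw [Nat.lt_succ_iff, ← hl.1]
      exact Finset.single_le_sum (f := fun i => l i) (fun _ _ => Nat.zero_le _)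
        (Finset.mem_univ i)
    · exact hl.1
  · intro c hc
    ext i
    simp
  · intro l hl
    exact Finsupp.equivFunOnFinite.symm_apply_apply l
  · intro c hc
    have hrw : -(∑ i, c i • a i) = ∑ i, c i • (-(a i)) := by
      rw [← Finset.sum_neg_distrib]
      exact Finset.sum_congr rfl fun i _ => (smul_neg _ _).symm
    rw [hrw, expo_sum]
    refine Finset.prod_congr rfl fun i _ => ?_
    rw [← expo_pow]
    congr 1

lemma Pser_mul {ι : Type} [Fintype ι] (a : ι → V) :
    Pser a *
      ∏ i : ι, (1 - PowerSeries.X *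
        PowerSeries.C (R := 𝕜) (RootSystemData.expo (-(a i)))) = 1 := by
  rw [Pser_eq_prod, ← Finset.prod_mul_distrib]
  exact Finset.prod_eq_one fun i _ => geom_mul _

namespace RootSystemData

variable (R : RootSystemData V)

lemma posS_union_posL : R.posS ∪ R.posL = R.pos := by
  ext α
  simp only [RootSystemData.posS, RootSystemData.posL, RootSystemData.short,
    RootSystemData.long, RootSystemData.pos, Finset.mem_union, Finset.mem_inter,
    Finset.mem_filter]
  constructor
  · rintro (⟨h, _⟩ | ⟨h, _⟩) <;> exact h
  · intro h
    by_cases hs : ∀ β ∈ R.Δ, ‖α‖ ≤ ‖β‖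
    · exact Or.inl ⟨h, h.1, hs⟩
    · push_neg at hs
      obtain ⟨β, hβ, hβ'⟩ := hs
      exact Or.inr ⟨h, h.1, β, hβ, hβ'⟩

lemma posS_disjoint_posL : Disjoint R.posS R.posL := by
  rw [Finset.disjoint_left]
  intro α hS hL
  simp only [RootSystemData.posS, RootSystemData.posL, RootSystemData.short,
    RootSystemData.long, Finset.mem_inter, Finset.mem_filter] at hS hL
  obtain ⟨β, hβ, hβ'⟩ := hL.2.2
  exact absurd (hS.2.2 β hβ) (not_le.mpr hβ')

lemma posS_subset_pos : R.posS ⊆ R.pos := Finset.inter_subset_left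

lemma pos_subset : R.pos ⊆ R.Δ := Finset.filter_subset _ _

lemma pol_pos_of_mem_pos {α : V} (h : α ∈ R.pos) : 0 < R.pol α :=
  (Finset.mem_filter.1 h).2

end RootSystemData

/-- Shorthand for the short positive roots as an indexed family. -/
abbrev coeS (R : RootSystemData V) : ↥R.posS → V := fun α => (α : V)

/-- Shorthand for the positive roots as an indexed family. -/
abbrev coeP (R : RootSystemData V) : ↥R.pos → V := fun α => (α : V)

lemma PserS_mul (R : RootSystemData V) :
    Pser (coeS R) * ∏ α ∈ R.posS,
      (1 - PowerSeries.X * PowerSeries.C (R := 𝕜) (RootSystemData.expo (-α))) = 1 := by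
  rw [← Finset.prod_coe_sort R.posS
    (fun α => 1 - PowerSeries.X * PowerSeries.C (R := 𝕜) (RootSystemData.expo (-α)))]
  exact Pser_mul _

lemma PserP_mul (R : RootSystemData V) :
    Pser (coeP R) * ∏ α ∈ R.pos,
      (1 - PowerSeries.X * PowerSeries.C (R := 𝕜) (RootSystemData.expo (-α))) = 1 := by
  rw [← Finset.prod_coe_sort R.pos
    (fun α => 1 - PowerSeries.X * PowerSeries.C (R := 𝕜) (RootSystemData.expo (-α)))]
  exact Pser_mul _

lemma keyPP (R : RootSystemData V) :
    Pser (coeS R) = Pser (coeP R) * ∏ α ∈ R.posL,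
      (1 - PowerSeries.X * PowerSeries.C (R := 𝕜) (RootSystemData.expo (-α))) := by
  set f : V → PowerSeries 𝕜 :=
    fun α => 1 - PowerSeries.X * PowerSeries.C (R := 𝕜) (RootSystemData.expo (-α)) with hf
  have hGP : (∏ α ∈ R.pos, f α) = (∏ α ∈ R.posS, f α) * ∏ α ∈ R.posL, f α := by
    rw [← Finset.prod_union (R.posS_disjoint_posL), R.posS_union_posL]
  have hS := PserS_mul R
  have hP := PserP_mul R
  calc Pser (coeS R) = Pser (coeS R) * (Pser (coeP R) * ∏ α ∈ R.pos, f α) := by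
        rw [hP, mul_one]
    _ = (Pser (coeP R) * ∏ α ∈ R.posL, f α) * (Pser (coeS R) * ∏ α ∈ R.posS, f α) := by
        rw [hGP]; ring
    _ = Pser (coeP R) * ∏ α ∈ R.posL, f α := by rw [hS, mul_one]

lemma GL_expand (R : RootSystemData V) :
    (∏ α ∈ R.posL,
      (1 - PowerSeries.X * PowerSeries.C (R := 𝕜) (RootSystemData.expo (-α)))) =
    ∑ T ∈ R.posL.powerset, ((-1 : ℤ) ^ T.card) •
      (PowerSeries.X ^ T.card *
        PowerSeries.C (R := 𝕜) (RootSystemData.expo (-(∑ α ∈ T, α)))) := by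
  classical
  have h1 : ∀ α : V, (1 : PowerSeries 𝕜) - PowerSeries.X *
      PowerSeries.C (R := 𝕜) (RootSystemData.expo (-α)) =
      (-(PowerSeries.X * PowerSeries.C (R := 𝕜) (RootSystemData.expo (-α)))) + 1 := by
    intro α; ring
  rw [Finset.prod_congr rfl fun α _ => h1 α, Finset.prod_add]
  refine Finset.sum_congr rfl fun T hT => ?_
  rw [Finset.prod_const_one, mul_one]
  have h2 : (∏ α ∈ T, -(PowerSeries.X * PowerSeries.C (R := 𝕜) (RootSystemData.expo (-α)))) =
      (-1 : PowerSeries 𝕜) ^ T.card *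
        ∏ α ∈ T, (PowerSeries.X * PowerSeries.C (R := 𝕜) (RootSystemData.expo (-α))) := by
    rw [← Finset.prod_const, ← Finset.prod_mul_distrib]
    exact Finset.prod_congr rfl fun α _ => (neg_one_mul _).symm
  rw [h2, Finset.prod_mul_distrib, Finset.prod_const, ← map_prod, ← expo_sum,
    ← Finset.sum_neg_distrib]
  rw [zsmul_eq_mul]
  push_cast
  ring

lemma I2 (R : RootSystemData V) :
    Pser (coeS R) = ∑ T ∈ R.posL.powerset, ((-1 : ℤ) ^ T.card) •
      (PowerSeries.X ^ T.card *
        (Pser (coeP R) *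
          PowerSeries.C (R := 𝕜) (RootSystemData.expo (-(∑ α ∈ T, α))))) := by
  rw [keyPP R, GL_expand R, Finset.mul_sum]
  refine Finset.sum_congr rfl fun T hT => ?_
  rw [mul_smul_comm, mul_left_comm]

lemma amaSum_apply {A : Type*} (s : Finset A) (f : A → 𝕜) (p : V) :
    (∑ i ∈ s, f i).coeff p = ∑ i ∈ s, (f i).coeff p := by
  rw [AddMonoidAlgebra.coeff_sum, Finsupp.finset_sum_apply]

lemma amaSmul_apply (z : ℤ) (f : 𝕜) (p : V) : (z • f).coeff p = z • f.coeff p :=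
  AddMonoidAlgebra.coeff_smul_apply z f p

/-- Coefficientwise evaluation of a power series over the group algebra at a point. -/
def Ev (p : V) (F : PowerSeries 𝕜) : PowerSeries ℤ :=
  PowerSeries.mk fun j => (PowerSeries.coeff j F).coeff p

lemma Ev_sum {A : Type*} (p : V) (s : Finset A) (F : A → PowerSeries 𝕜) :
    Ev p (∑ i ∈ s, F i) = ∑ i ∈ s, Ev p (F i) := by
  refine PowerSeries.ext fun j => ?_
  simp [Ev, amaSum_apply]

lemma Ev_zsmul (p : V) (z : ℤ) (F : PowerSeries 𝕜) :
    Ev p (z • F) = z • Ev p F := by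
  refine PowerSeries.ext fun j => ?_
  simp only [Ev, PowerSeries.coeff_mk, map_zsmul, amaSmul_apply]

lemma Ev_X_pow_mul (p : V) (n : ℕ) (F : PowerSeries 𝕜) :
    Ev p (PowerSeries.X ^ n * F) = PowerSeries.X ^ n * Ev p F := by
  refine PowerSeries.ext fun j => ?_
  rw [PowerSeries.coeff_X_pow_mul']
  simp only [Ev, PowerSeries.coeff_mk]
  rw [PowerSeries.coeff_X_pow_mul']
  split_ifs with h
  · simp [Ev]
  · simp

lemma Ev_mul_C_expo (p τ : V) (F : PowerSeries 𝕜) :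
    Ev p (F * PowerSeries.C (R := 𝕜) (RootSystemData.expo τ)) = Ev (p - τ) F := by
  refine PowerSeries.ext fun j => ?_
  simp only [Ev, PowerSeries.coeff_mk, PowerSeries.coeff_mul_C]
  rw [RootSystemData.expo, AddMonoidAlgebra.coeff_mul_single_apply, mul_one, ← sub_eq_add_neg]

lemma Ev_Pser {ι : Type} [Fintype ι] (a : ι → V) (ν : V) :
    Ev (-ν) (Pser a) = PPart a ν := by
  refine PowerSeries.ext fun j => ?_
  simp only [Ev, Pser, PPart, PowerSeries.coeff_mk]
  rw [amaSum_apply]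
  have h : ∀ c ∈ tuples ι j, (RootSystemData.expo (-(∑ i, c i • a i)) : 𝕜).coeff (-ν) =
      if (∑ i, c i • a i) = ν then (1 : ℤ) else 0 := by
    intro c _
    rw [RootSystemData.expo, AddMonoidAlgebra.coeff_single, Finsupp.single_apply]
    simp [neg_inj]
  rw [Finset.sum_congr rfl h, Finset.sum_boole]

lemma P2 (R : RootSystemData V) (ν : V) :
    PPart (coeS R) ν = ∑ T ∈ R.posL.powerset, ((-1 : ℤ) ^ T.card) •
      (PowerSeries.X ^ T.card * PPart (coeP R) (ν - ∑ α ∈ T, α)) := by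
  have h := congrArg (Ev (-ν)) (I2 R)
  rw [Ev_Pser, Ev_sum] at h
  rw [h]
  refine Finset.sum_congr rfl fun T hT => ?_
  rw [Ev_zsmul, Ev_X_pow_mul, Ev_mul_C_expo]
  have : -ν - (-(∑ α ∈ T, α)) = -(ν - ∑ α ∈ T, α) := by abel
  rw [this, Ev_Pser]

lemma Fser_eq (R : RootSystemData V) [Fintype R.weyl] (lam : V) :
    Fser R lam =
      PowerSeries.C (R := 𝕜) (RootSystemData.expo (-R.rho) *
        R.Jop (RootSystemData.expo (lam + R.rho))) * Pser (coeS R) := by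
  refine PowerSeries.ext fun j => ?_
  rw [PowerSeries.coeff_C_mul]
  simp only [Fser, Pser, PowerSeries.coeff_mk, RootSystemData.Jop, RootSystemData.expo,
    AddMonoidAlgebra.mapDomain_single]
  rw [Finset.sum_comm, Finset.mul_sum]
  refine Finset.sum_congr rfl fun c _ => ?_
  rw [Finset.mul_sum, Finset.sum_mul]
  refine Finset.sum_congr rfl fun w _ => ?_
  rw [mul_smul_comm, smul_mul_assoc]
  congr 1
  simp only [coeS]
  rw [AddMonoidAlgebra.single_mul_single, AddMonoidAlgebra.single_mul_single, one_mul]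
  congr 1
  abel

lemma fiber_eq {ι : Type} [Fintype ι] {M : Type} [AddCommGroup M] (B : ℕ) (a : ι → M)
    (ν : M) (j : ℕ) (hj : j < B + 1) :
    Finset.filter (fun c => (∑ i, c i) = j)
        ((Fintype.piFinset fun _ : ι => Finset.range (B + 1)).filter
          (fun c => ∑ i, c i • a i = ν)) =
      (tuples ι j).filter (fun c => ∑ i, c i • a i = ν) := by
  ext c
  simp only [tuples, Finset.mem_filter, Fintype.mem_piFinset, Finset.mem_range]
  constructor
  · rintro ⟨⟨h1, h2⟩, h3⟩
    have hb : ∀ i, c i < j + 1 := fun i => by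
      have h5 := Finset.single_le_sum (f := c) (fun _ _ => Nat.zero_le _)
        (Finset.mem_univ i)
      omega
    exact ⟨⟨hb, h3⟩, h2⟩
  · rintro ⟨⟨h1, h3⟩, h2⟩
    have hb : ∀ i, c i < B + 1 := fun i => by
      have h4 := h1 i
      omega
    exact ⟨⟨hb, h2⟩, h3⟩

lemma Ncard_eq {ι : Type} [Fintype ι] (a : ι → V) (φ : V →ₗ[ℝ] ℝ) {m : ℝ} (hm : 0 < m)
    (ha : ∀ i, m ≤ φ (a i)) (ν : V) (B : ℕ) (hB : φ ν ≤ (B : ℝ) * m) :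
    (Nat.card {c : ι → ℕ // ∑ i, c i • a i = ν} : ℤ) =
      ∑ j ∈ Finset.range (B + 1), PowerSeries.coeff j (PPart a ν) := by
  classical
  have key : ∀ c : ι → ℕ, (∑ i, c i • a i = ν) → (∑ i, c i) ≤ B := by
    intro c hc
    have h1 : ((∑ i, c i : ℕ) : ℝ) * m ≤ φ ν := by
      rw [← hc, map_sum]
      push_cast
      rw [Finset.sum_mul]
      refine Finset.sum_le_sum fun i _ => ?_
      calc ((c i : ℝ)) * m ≤ (c i : ℝ) * φ (a i) :=
            mul_le_mul_of_nonneg_left (ha i) (Nat.cast_nonneg _)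
        _ = φ ((c i) • a i) := by rw [map_nsmul, nsmul_eq_mul]
    have h2 : ((∑ i, c i : ℕ) : ℝ) ≤ (B : ℝ) := le_of_mul_le_mul_right (h1.trans hB) hm
    exact_mod_cast h2
  have hmem : ∀ c : ι → ℕ, (∑ i, c i • a i = ν) ↔
      c ∈ (Fintype.piFinset fun _ : ι => Finset.range (B + 1)).filter
        (fun c => ∑ i, c i • a i = ν) := by
    intro c
    constructor
    · intro h
      refine Finset.mem_filter.2 ⟨Fintype.mem_piFinset.2 fun i => Finset.mem_range.2 ?_, h⟩
      have h3 : c i ≤ ∑ i', c i' :=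
        Finset.single_le_sum (f := c) (fun _ _ => Nat.zero_le _) (Finset.mem_univ i)
      have h4 := key c h
      omega
    · exact fun h => (Finset.mem_filter.1 h).2
  have hcard : Nat.card {c : ι → ℕ // ∑ i, c i • a i = ν} =
      ((Fintype.piFinset fun _ : ι => Finset.range (B + 1)).filter
        (fun c => ∑ i, c i • a i = ν)).card := by
    rw [Nat.card_congr (Equiv.subtypeEquivRight hmem)]
    exact Nat.card_eq_finsetCard _
  rw [hcard]
  have hfib : ∀ c ∈ (Fintype.piFinset fun _ : ι => Finset.range (B + 1)).filter
      (fun c => ∑ i, c i • a i = ν), (∑ i, c i) ∈ Finset.range (B + 1) := by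
    intro c hc
    rw [Finset.mem_range, Nat.lt_succ_iff]
    exact key c (Finset.mem_filter.1 hc).2
  rw [Finset.card_eq_sum_card_fiberwise hfib]
  push_cast
  refine Finset.sum_congr rfl fun j hj => ?_
  rw [Finset.mem_range] at hj
  rw [fiber_eq B a ν j hj, PPart, PowerSeries.coeff_mk]

lemma sum_coeff_X_pow_mul (F : PowerSeries ℤ) (k B : ℕ) (hk : k ≤ B) :
    ∑ j ∈ Finset.range (B + 1), PowerSeries.coeff j (PowerSeries.X ^ k * F) =
      ∑ j ∈ Finset.range (B + 1 - k), PowerSeries.coeff j F := by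
  have h : ∀ j, PowerSeries.coeff j (PowerSeries.X ^ k * F) =
      if k ≤ j then PowerSeries.coeff (j - k) F else 0 :=
    fun j => PowerSeries.coeff_X_pow_mul' F k j
  simp only [h]
  rw [Finset.range_eq_Ico,
    ← Finset.sum_Ico_consecutive _ (Nat.zero_le k) (by omega : k ≤ B + 1)]
  have h0 : (∑ j ∈ Finset.Ico 0 k,
      (if k ≤ j then PowerSeries.coeff (j - k) F else 0)) = 0 :=
    Finset.sum_eq_zero fun j hj => by
      rw [Finset.mem_Ico] at hj
      rw [if_neg (by omega)]
  rw [h0, zero_add, Finset.sum_Ico_eq_sum_range]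
  refine Finset.sum_congr (by rw [Finset.range_eq_Ico]) fun i _ => ?_
  rw [if_pos (Nat.le_add_right k i), Nat.add_sub_cancel_left]

end Statement19Aux

/-- (1) The generating identity
`Σ_μ m̄^μ_λ(q) e^μ · ∏_{α∈Δ⁺_s}(1 − q e^{−α}) = e^{−ρ} J(e^{λ+ρ})`, i.e.
`Σ_μ m̄^μ_λ(q) e^μ = χ_λ ∏_{α>0}(1−e^{−α})/∏_{α∈Δ⁺_s}(1−qe^{−α})`.
(2) `m̄^μ_λ(q) = Σ_{A⊆Δ⁺_l} (−q)^{#A} m^{μ+|A|}_λ(q)`, relating short and Lusztig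
`q`-analogues.  (3) At `q = 1`, `μ = 0`:
`dim V_λ^H = Σ_{A⊆Δ⁺_l} (−1)^{#A} m_λ^{|A|}` (with `dim V_λ^H = m̄^0_λ(1)`). -/
theorem statement19 {V : Type} [NormedAddCommGroup V] [InnerProductSpace ℝ V]
    [FiniteDimensional ℝ V] (R : RootSystemData V) [Fintype R.weyl]
    (hirr : R.IsIrreducible) (h2 : R.TwoLengths)
    (lam : V) (hlam : R.Dominant lam) :
    (Fser R lam *
        ∏ α ∈ R.posS,
          (1 - PowerSeries.X *
            PowerSeries.C (R := AddMonoidAlgebra ℤ V) (RootSystemData.expo (-α))) =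
      PowerSeries.C (R := AddMonoidAlgebra ℤ V)
        (RootSystemData.expo (-R.rho) * R.Jop (RootSystemData.expo (lam + R.rho)))) ∧
    (∀ mu : V,
      R.mbar lam mu =
        ∑ S ∈ R.posL.powerset,
          ((-1 : ℤ) ^ S.card) •
            (PowerSeries.X ^ S.card * R.mfull lam (mu + ∑ α ∈ S, α))) ∧
    R.mult1 (fun α : R.posS => (α : V)) lam 0 =
      ∑ S ∈ R.posL.powerset,
        ((-1 : ℤ) ^ S.card) * R.mult1 (fun α : R.pos => (α : V)) lam (∑ α ∈ S, α) := by
  classical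
  -- Part 2
  have part2 : ∀ mu : V,
      R.mbar lam mu =
        ∑ T ∈ R.posL.powerset,
          ((-1 : ℤ) ^ T.card) •
            (PowerSeries.X ^ T.card * R.mfull lam (mu + ∑ α ∈ T, α)) := by
    intro mu
    rw [RootSystemData.mbar, RootSystemData.genKF]
    have h1 : ∀ w : R.weyl,
        ((-1 : ℤ) ^ R.len (w : V ≃ₗ[ℝ] V)) •
          PPart (fun α : R.posS => (α : V))
            ((w : V ≃ₗ[ℝ] V) (lam + R.rho) - (mu + R.rho)) =
        ∑ T ∈ R.posL.powerset, ((-1 : ℤ) ^ T.card) •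
          (((-1 : ℤ) ^ R.len (w : V ≃ₗ[ℝ] V)) •
            (PowerSeries.X ^ T.card *
              PPart (fun α : R.pos => (α : V))
                ((w : V ≃ₗ[ℝ] V) (lam + R.rho) - (mu + (∑ α ∈ T, α) + R.rho)))) := by
      intro w
      rw [P2 R, Finset.smul_sum]
      refine Finset.sum_congr rfl fun T hT => ?_
      rw [smul_comm]
      have harg : (w : V ≃ₗ[ℝ] V) (lam + R.rho) - (mu + R.rho) - (∑ α ∈ T, α) =
          (w : V ≃ₗ[ℝ] V) (lam + R.rho) - (mu + (∑ α ∈ T, α) + R.rho) := by abel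
      rw [harg]
    rw [Finset.sum_congr rfl fun w _ => h1 w, Finset.sum_comm]
    refine Finset.sum_congr rfl fun T hT => ?_
    rw [RootSystemData.mfull, RootSystemData.genKF, Finset.mul_sum, Finset.smul_sum]
    refine Finset.sum_congr rfl fun w _ => ?_
    rw [mul_smul_comm]
  refine ⟨?_, part2, ?_⟩
  · rw [Fser_eq, mul_assoc, PserS_mul, mul_one]
  -- Part 3
  · have hne : R.pos.Nonempty := by
      obtain ⟨α, hα, -⟩ := h2
      rcases lt_or_gt_of_ne (R.pol_ne α hα) with hneg | hpos
      · exact ⟨-α, Finset.mem_filter.2 ⟨R.neg_mem α hα, by rw [map_neg]; linarith⟩⟩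
      · exact ⟨α, Finset.mem_filter.2 ⟨hα, hpos⟩⟩
    obtain ⟨β, hβ, hmin⟩ := Finset.exists_min_image R.pos R.pol hne
    set m : ℝ := R.pol β with hmdef
    have hm : 0 < m := R.pol_pos_of_mem_pos hβ
    have hmaP : ∀ i : ↥R.pos, m ≤ R.pol ((i : V)) := fun i => hmin i i.2
    have hmaS : ∀ i : ↥R.posS, m ≤ R.pol ((i : V)) :=
      fun i => hmin i (R.posS_subset_pos i.2)
    set ν1 : R.weyl → V := fun w => (w : V ≃ₗ[ℝ] V) (lam + R.rho) - (0 + R.rho) with hν1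
    set ν2 : R.weyl → Finset V → V :=
      fun w T => (w : V ≃ₗ[ℝ] V) (lam + R.rho) - ((∑ α ∈ T, α) + R.rho) with hν2
    set M : ℝ := ∑ w : R.weyl, ∑ T ∈ R.posL.powerset,
        (|R.pol (ν1 w)| + |R.pol (ν2 w T)|) with hM
    have hMterm : ∀ w : R.weyl, ∀ T ∈ R.posL.powerset,
        |R.pol (ν1 w)| + |R.pol (ν2 w T)| ≤ M := by
      intro w T hT
      rw [hM]
      calc |R.pol (ν1 w)| + |R.pol (ν2 w T)|
          ≤ ∑ T' ∈ R.posL.powerset, (|R.pol (ν1 w)| + |R.pol (ν2 w T')|) :=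
            Finset.single_le_sum
              (f := fun T' => |R.pol (ν1 w)| + |R.pol (ν2 w T')|)
              (fun T' _ => by positivity) hT
        _ ≤ _ := Finset.single_le_sum
            (f := fun w' => ∑ T' ∈ R.posL.powerset, (|R.pol (ν1 w')| + |R.pol (ν2 w' T')|))
            (fun w' _ => Finset.sum_nonneg fun T' _ => by positivity)
            (Finset.mem_univ w)
    set B : ℕ := ⌈M / m⌉₊ + R.posL.card with hBdef
    have hMle : M ≤ (⌈M / m⌉₊ : ℝ) * m := by
      calc M = (M / m) * m := (div_mul_cancel₀ M hm.ne').symm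
        _ ≤ _ := mul_le_mul_of_nonneg_right (Nat.le_ceil _) hm.le
    have hB1 : ∀ w : R.weyl, R.pol (ν1 w) ≤ (B : ℝ) * m := by
      intro w
      have h := hMterm w ∅ (Finset.empty_mem_powerset _)
      have h2' : R.pol (ν1 w) ≤ M :=
        le_trans (le_trans (le_abs_self _)
          (le_add_of_nonneg_right (abs_nonneg _))) h
      refine le_trans (le_trans h2' hMle) ?_
      exact mul_le_mul_of_nonneg_right
        (Nat.cast_le.2 (Nat.le_add_right _ _)) hm.le
    have hB2 : ∀ w : R.weyl, ∀ T ∈ R.posL.powerset,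
        R.pol (ν2 w T) ≤ ((B - T.card : ℕ) : ℝ) * m := by
      intro w T hT
      have h := hMterm w T hT
      have h2' : R.pol (ν2 w T) ≤ M :=
        le_trans (le_trans (le_abs_self _)
          (le_add_of_nonneg_left (abs_nonneg _))) h
      refine le_trans (le_trans h2' hMle) ?_
      refine mul_le_mul_of_nonneg_right (Nat.cast_le.2 ?_) hm.le
      have := Finset.card_le_card (Finset.mem_powerset.1 hT)
      omega
    have hco : ∀ (j : ℕ) {A : Type} (s : Finset A) (z : A → ℤ) (F : A → PowerSeries ℤ),
        PowerSeries.coeff j (∑ i ∈ s, z i • F i) =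
          ∑ i ∈ s, z i * PowerSeries.coeff j (F i) := by
      intro j A s z F
      rw [map_sum]
      exact Finset.sum_congr rfl fun i _ => by rw [map_zsmul, smul_eq_mul]
    have e1 : ∑ j ∈ Finset.range (B + 1), PowerSeries.coeff j (R.mbar lam 0) =
        R.mult1 (fun α : R.posS => (α : V)) lam 0 := by
      rw [RootSystemData.mbar, RootSystemData.genKF, RootSystemData.mult1]
      rw [Finset.sum_congr rfl fun j _ => hco j Finset.univ _ _, Finset.sum_comm]
      refine Finset.sum_congr rfl fun w _ => ?_
      rw [← Finset.mul_sum]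
      congr 1
      exact (Ncard_eq _ R.pol hm hmaS _ B (hB1 w)).symm
    have e2 : ∀ T ∈ R.posL.powerset,
        (∑ j ∈ Finset.range (B + 1), PowerSeries.coeff j
          (PowerSeries.X ^ T.card * R.mfull lam (0 + ∑ α ∈ T, α))) =
        R.mult1 (fun α : R.pos => (α : V)) lam (∑ α ∈ T, α) := by
      intro T hT
      have hk : T.card ≤ B := by
        have := Finset.card_le_card (Finset.mem_powerset.1 hT)
        omega
      simp only [zero_add]
      rw [sum_coeff_X_pow_mul _ _ _ hk, (by omega : B + 1 - T.card = (B - T.card) + 1)]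
      rw [RootSystemData.mfull, RootSystemData.genKF, RootSystemData.mult1]
      rw [Finset.sum_congr rfl fun j _ => hco j Finset.univ _ _, Finset.sum_comm]
      refine Finset.sum_congr rfl fun w _ => ?_
      rw [← Finset.mul_sum]
      congr 1
      exact (Ncard_eq _ R.pol hm hmaP _ (B - T.card) (hB2 w T hT)).symm
    rw [← e1, part2 0]
    rw [Finset.sum_congr rfl fun j _ => hco j R.posL.powerset _ _, Finset.sum_comm]
    refine Finset.sum_congr rfl fun T hT => ?_
    rw [← Finset.mul_sum, e2 T hT]
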